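/- Longest-gap-from-the-left lemma: Let (x_n) be a nonincreasing summable sequence of positive reals and suppose (a,b) is a gap in E(x_n) such that every gap (a₁,b₁) of E(x_n) with b₁ < a satisfies b₁ − a₁ < b − a. Then b = x_k for some k, and a = r_k = Σ_{n>k} x_n. -/

import Mathlib

def achievementSet (x : ℕ → ℝ) : Set ℝ :=
  {y | ∃ ε : ℕ → Bool, y = ∑' n, if ε n then x n else 0}

namespace AchAux

noncomputable def val (x : ℕ → ℝ) (ε : ℕ → Bool) : ℝ := ∑' n, if ε n then x n else 0

variable {x : ℕ → ℝ}

lemma summable_ind (hpos : ∀ n, 0 < x n) (hsum : Summable x) (ε : ℕ → Bool) :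
    Summable (fun n => if ε n then x n else 0) := by
  apply Summable.of_nonneg_of_le (fun n => ?_) (fun n => ?_) hsum
  · split
    · exact (hpos n).le
    · exact le_refl _
  · split
    · exact le_refl _
    · exact (hpos n).le

lemma val_mem (ε : ℕ → Bool) : val x ε ∈ achievementSet x := ⟨ε, rfl⟩

lemma val_nonneg (hpos : ∀ n, 0 < x n) (ε : ℕ → Bool) : 0 ≤ val x ε := by
  apply tsum_nonneg
  intro n
  split
  · exact (hpos n).le
  · exact le_refl _

lemma term_le (hpos : ∀ n, 0 < x n) (hsum : Summable x) {ε : ℕ → Bool} {i : ℕ}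
    (h : ε i = true) : x i ≤ val x ε := by
  have h1 := Summable.le_tsum (summable_ind hpos hsum ε) i (fun j _ => by
    split
    · exact (hpos j).le
    · exact le_refl _)
  simpa [h, val] using h1

lemma mem_nonneg (hpos : ∀ n, 0 < x n) {y : ℝ} (hy : y ∈ achievementSet x) : 0 ≤ y := by
  obtain ⟨ε, rfl⟩ := hy
  exact val_nonneg hpos ε

lemma val_update (hpos : ∀ n, 0 < x n) (hsum : Summable x) (ε : ℕ → Bool) (i : ℕ) (c : Bool) :
    val x (Function.update ε i c)
      = val x ε - (if ε i then x i else 0) + (if c then x i else 0) := by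
  classical
  have h1 := Summable.tsum_eq_add_tsum_ite (summable_ind hpos hsum (Function.update ε i c)) i
  have h2 := Summable.tsum_eq_add_tsum_ite (summable_ind hpos hsum ε) i
  have h3 : (∑' n, ite (n = i) 0 (if Function.update ε i c n then x n else 0))
      = ∑' n, ite (n = i) 0 (if ε n then x n else 0) := by
    apply tsum_congr
    intro n
    by_cases hn : n = i
    · simp [hn]
    · simp [hn, Function.update_of_ne hn]
  show (∑' n, if Function.update ε i c n then x n else 0) = _
  rw [h1, h3, Function.update_self]
  show _ = val x ε - _ + _
  unfold val
  rw [h2]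
  ring

lemma sub_mem (hpos : ∀ n, 0 < x n) (hsum : Summable x) {ε : ℕ → Bool} {i : ℕ}
    (h : ε i = true) : val x ε - x i ∈ achievementSet x := by
  have hv := val_update hpos hsum ε i false
  rw [h] at hv
  norm_num at hv
  rw [← hv]
  exact val_mem _

lemma add_mem (hpos : ∀ n, 0 < x n) (hsum : Summable x) {ε : ℕ → Bool} {i : ℕ}
    (h : ε i = false) : val x ε + x i ∈ achievementSet x := by
  have hv := val_update hpos hsum ε i true
  rw [h] at hv
  norm_num at hv
  rw [← hv]
  exact val_mem _

lemma val_or (hpos : ∀ n, 0 < x n) (hsum : Summable x) {ε₁ ε₂ : ℕ → Bool}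
    (hdisj : ∀ n, ¬(ε₁ n = true ∧ ε₂ n = true)) :
    val x (fun n => ε₁ n || ε₂ n) = val x ε₁ + val x ε₂ := by
  unfold val
  rw [← Summable.tsum_add (summable_ind hpos hsum ε₁) (summable_ind hpos hsum ε₂)]
  apply tsum_congr
  intro n
  rcases h1 : ε₁ n with _ | _ <;> rcases h2 : ε₂ n with _ | _ <;> simp [h1, h2]
  exact absurd ⟨h1, h2⟩ (hdisj n)

lemma val_finset (F : Finset ℕ) : val x (fun n => decide (n ∈ F)) = ∑ n ∈ F, x n := by
  classical
  unfold val
  rw [tsum_eq_sum (s := F) (fun n hn => by simp [hn])]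
  apply Finset.sum_congr rfl
  intro n hn
  simp [hn]

lemma sum_finset_mem (F : Finset ℕ) : (∑ n ∈ F, x n) ∈ achievementSet x :=
  ⟨fun n => decide (n ∈ F), (val_finset F).symm⟩

lemma single_mem (i : ℕ) : x i ∈ achievementSet x := by
  have := sum_finset_mem (x := x) {i}
  simpa using this

lemma val_tail (hpos : ∀ n, 0 < x n) (hsum : Summable x) (k : ℕ) :
    val x (fun n => decide (k < n)) = ∑' n, x (k + 1 + n) := by
  classical
  have hsplit := Summable.sum_add_tsum_nat_add (f := x) (k + 1) hsum
  have htot : val x (fun _ => true) = ∑' n, x n := by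
    unfold val; apply tsum_congr; intro n; simp
  have hdisj : ∀ n, ¬((fun n => decide (n ∈ Finset.range (k+1))) n = true
      ∧ (fun n => decide (k < n)) n = true) := by
    intro n ⟨h1, h2⟩
    simp [Finset.mem_range] at h1 h2
    omega
  have hunion : (fun n => (decide (n ∈ Finset.range (k+1))) || (decide (k < n))) = fun _ => true := by
    funext n
    simp [Finset.mem_range]
    omega
  have h4 := val_or hpos hsum hdisj
  rw [hunion, htot, val_finset] at h4
  have h5 : ∑' n, x (k + 1 + n) = ∑' n, x (n + (k + 1)) := by
    apply tsum_congr; intro n; rw [add_comm]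
  rw [h5]
  linarith [hsplit]

lemma isCompact_ach (hpos : ∀ n, 0 < x n) (hsum : Summable x) :
    IsCompact (achievementSet x) := by
  have hr : achievementSet x
      = Set.range (fun ε : ℕ → Bool => ∑' n, if ε n then x n else 0) := by
    ext y
    constructor
    · rintro ⟨ε, rfl⟩; exact ⟨ε, rfl⟩
    · rintro ⟨ε, rfl⟩; exact ⟨ε, rfl⟩
  rw [hr]
  apply isCompact_range
  apply continuous_tsum (u := x) (fun n => ?_) hsum (fun n ε => ?_)
  · exact Continuous.comp (continuous_of_discreteTopology
      (f := fun c : Bool => if c then x n else 0)) (continuous_apply n)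
  · rw [Real.norm_eq_abs]
    split
    · rw [abs_of_nonneg (hpos n).le]
    · simpa using (hpos n).le

end AchAux

open AchAux

theorem stmt_10 (x : ℕ → ℝ) (hmono : Antitone x) (hpos : ∀ n, 0 < x n)
    (hsum : Summable x)
    (a b : ℝ) (hab : a < b)
    (ha : a ∈ achievementSet x) (hb : b ∈ achievementSet x)
    (hgap : Set.Ioo a b ∩ achievementSet x = ∅)
    (hleft : ∀ a₁ b₁ : ℝ, a₁ < b₁ → a₁ ∈ achievementSet x → b₁ ∈ achievementSet x →
      Set.Ioo a₁ b₁ ∩ achievementSet x = ∅ → b₁ < a → b₁ - a₁ < b - a) :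
    ∃ k : ℕ, b = x k ∧ a = ∑' n, x (k + 1 + n) := by
  classical
  have ha0 : 0 ≤ a := mem_nonneg hpos ha
  have hb0 : 0 < b := lt_of_le_of_lt ha0 hab
  have hd : 0 < b - a := by linarith
  have hgapE : ∀ y, y ∈ achievementSet x → a < y → y < b → False := by
    intro y hy h1 h2
    have hmem : y ∈ Set.Ioo a b ∩ achievementSet x := ⟨⟨h1, h2⟩, hy⟩
    rw [hgap] at hmem
    exact hmem
  have hbelow : ∀ y, y ∈ achievementSet x → y < b → y ≤ a := by
    intro y hy hyb
    by_contra h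
    push_neg at h
    exact hgapE y hy h hyb
  have hx0 : Filter.Tendsto x Filter.atTop (nhds 0) := hsum.tendsto_atTop_zero
  have hsmall : ∀ δ : ℝ, 0 < δ → ∃ n, x n < δ := by
    intro δ hδ
    exact (hx0.eventually (eventually_lt_nhds hδ)).exists
  have hfin : ∀ δ : ℝ, 0 < δ → {n | δ ≤ x n}.Finite := by
    intro δ hδ
    have h2 : ∀ᶠ n in Filter.cofinite, x n < δ := by
      rw [Nat.cofinite_eq_atTop]
      exact hx0.eventually (eventually_lt_nhds hδ)
    have h3 := Filter.eventually_cofinite.mp h2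
    convert h3 using 1
    ext n
    simp [not_lt]
  have hEcomp : IsCompact (achievementSet x) := isCompact_ach hpos hsum
  have h0E : (0:ℝ) ∈ achievementSet x := ⟨fun _ => false, by simp⟩
  -- PART 1 : b = x k₀ for some k₀
  obtain ⟨εb, hεb⟩ := hb
  have hεb' : b = val x εb := hεb
  have hbig : ∀ n, εb n = true → b - a ≤ x n := by
    intro n hn
    have hsub : b - x n ∈ achievementSet x := by
      rw [hεb']
      exact sub_mem hpos hsum hn
    have h1 : b - x n < b := by linarith [hpos n]
    have h2 := hbelow _ hsub h1
    linarith
  have hAfin : {n | εb n = true}.Finite := (hfin (b - a) hd).subset (fun n hn => hbig n hn)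
  have hAne : {n | εb n = true}.Nonempty := by
    by_contra h
    rw [Set.not_nonempty_iff_eq_empty] at h
    have hz : ∀ n, εb n = false := by
      intro n
      by_contra hzn
      have hmem : n ∈ {n | εb n = true} := by
        simp only [Set.mem_setOf_eq]
        simpa using hzn
      rw [h] at hmem
      exact hmem
    have : b = 0 := by
      rw [hεb']
      show (∑' m, if εb m then x m else 0) = 0
      have heq : (fun m => if εb m then x m else 0) = fun _ => (0:ℝ) := by
        funext m
        rw [hz m]
        simp
      rw [heq, tsum_zero]
    linarith
  obtain ⟨k₀, hk₀A, hk₀min⟩ := Finset.exists_min_image hAfin.toFinset x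
    (by rwa [Set.Finite.toFinset_nonempty])
  have hk₀mem : εb k₀ = true := by
    rwa [Set.Finite.mem_toFinset] at hk₀A
  have hk₀min' : ∀ j, εb j = true → x k₀ ≤ x j := by
    intro j hj
    exact hk₀min j (by rwa [Set.Finite.mem_toFinset])
  have hsingle : ∀ j, εb j = true → j = k₀ := by
    by_contra hcon
    push_neg at hcon
    obtain ⟨j, hj, hjk⟩ := hcon
    set εc := Function.update εb k₀ false with hεc_def
    have hcval : val x εc = b - x k₀ := by
      have hv := val_update hpos hsum εb k₀ false
      rw [hk₀mem] at hv
      norm_num at hv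
      rw [hεc_def, hv, ← hεb']
    have hcE : b - x k₀ ∈ achievementSet x := by
      rw [← hcval]; exact val_mem εc
    have hca : b - x k₀ ≤ a := hbelow _ hcE (by linarith [hpos k₀])
    have hεcj : εc j = true := by
      rw [hεc_def, Function.update_of_ne hjk]
      exact hj
    have hxjc : x j ≤ b - x k₀ := by
      have := term_le hpos hsum hεcj
      rwa [hcval] at this
    have hxkj : x k₀ ≤ x j := hk₀min' j hj
    have hxk_le_a : x k₀ ≤ a := le_trans hxkj (le_trans hxjc hca)
    have hempty1 : ∀ u, u ∈ achievementSet x → x k₀ - (b - a) < u → u < x k₀ → False := by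
      intro u hu h1 h2
      obtain ⟨εu, hεu⟩ := hu
      have hεu' : u = val x εu := hεu
      have hdisj : ∀ n, ¬(εc n = true ∧ εu n = true) := by
        intro n ⟨hn1, hn2⟩
        have hn1' : εb n = true := by
          by_cases hnk : n = k₀
          · rw [hεc_def, hnk, Function.update_self] at hn1
            exact absurd hn1 (by simp)
          · rw [hεc_def, Function.update_of_ne hnk] at hn1
            exact hn1
        have t1 : x n ≤ u := by
          rw [hεu']
          exact term_le hpos hsum hn2
        have t2 : x k₀ ≤ x n := hk₀min' n hn1'
        linarith
      have hsum_or := val_or hpos hsum hdisj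
      have hmem2 : (b - x k₀) + u ∈ achievementSet x := by
        rw [← hcval, hεu', ← hsum_or]
        exact val_mem _
      exact hgapE _ hmem2 (by linarith) (by linarith)
    rcases lt_or_eq_of_le hxk_le_a with hlt | heq
    · -- x k₀ < a
      have hxk_d : b - a ≤ x k₀ := hbig k₀ hk₀mem
      have hcomp2 : IsCompact (achievementSet x ∩ Set.Icc 0 (x k₀ - (b - a))) :=
        hEcomp.inter_right isClosed_Icc
      obtain ⟨u1, hu1⟩ := hcomp2.exists_isGreatest
        ⟨0, h0E, ⟨le_refl 0, by linarith⟩⟩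
      have hu1le : u1 ≤ x k₀ - (b - a) := hu1.1.2.2
      have hgap2 : Set.Ioo u1 (x k₀) ∩ achievementSet x = ∅ := by
        rw [Set.eq_empty_iff_forall_notMem]
        rintro y ⟨⟨hy1, hy2⟩, hyE⟩
        by_cases hyc : y ≤ x k₀ - (b - a)
        · have : y ≤ u1 := hu1.2 ⟨hyE, ⟨mem_nonneg hpos hyE, hyc⟩⟩
          linarith
        · push_neg at hyc
          exact hempty1 y hyE hyc hy2
      have := hleft u1 (x k₀) (by linarith) hu1.1.1 (single_mem k₀) hgap2 hlt
      linarith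
    · -- x k₀ = a
      have hba : b - a = x k₀ := by
        have : a ≤ b - x k₀ := by rw [← heq]; exact le_trans hxkj hxjc
        linarith [hca]
      obtain ⟨n, hn⟩ := hsmall (x k₀) (hpos k₀)
      exact hempty1 (x n) (single_mem n) (by rw [hba]; linarith [hpos n]) hn
  have hbxk : b = x k₀ := by
    have hεbeq : εb = fun n => decide (n ∈ ({k₀} : Finset ℕ)) := by
      funext n
      by_cases hn : εb n = true
      · rw [hn, hsingle n hn]
        simp
      · have hn' : εb n = false := by simpa using hn
        rw [hn']
        have hne : n ≠ k₀ := by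
          intro hh
          rw [hh, hk₀mem] at hn'
          exact absurd hn' (by simp)
        simp [hne]
    rw [hεb', hεbeq, val_finset]
    simp
  -- PART 2 : pick the largest k with x k = b, and show a = r_k
  have hKfin : {n | x n = b}.Finite := (hfin b hb0).subset (fun n hn => le_of_eq hn.symm)
  have hKne : {n | x n = b}.Nonempty := ⟨k₀, hbxk.symm⟩
  have hKne' : hKfin.toFinset.Nonempty := by rwa [Set.Finite.toFinset_nonempty]
  set k := hKfin.toFinset.max' hKne' with hkdef
  have hk_eq : x k = b := by
    have := hKfin.toFinset.max'_mem hKne'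
    rwa [Set.Finite.mem_toFinset] at this
  have hk_top : ∀ n, x n = b → n ≤ k := by
    intro n hn
    exact hKfin.toFinset.le_max' n (by rwa [Set.Finite.mem_toFinset])
  have hlt_k : ∀ n, k < n → x n < b := by
    intro n hn
    have h1 : x n ≤ x k := hmono (le_of_lt hn)
    rcases lt_or_eq_of_le h1 with h|h
    · rw [← hk_eq]; exact h
    · rw [hk_eq] at h
      have := hk_top n h
      omega
  have hge_k : ∀ n, n ≤ k → b ≤ x n := by
    intro n hn
    rw [← hk_eq]
    exact hmono hn
  have hRsum : Summable (fun n => x (k + 1 + n)) := by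
    have h1 : Summable (fun n => x (n + (k+1))) := (summable_nat_add_iff (k+1)).mpr hsum
    exact h1.congr (fun n => by rw [add_comm])
  obtain ⟨εa, hεa⟩ := ha
  have hεa' : a = val x εa := hεa
  have hsupp_a : ∀ i, εa i = true → k < i := by
    intro i hi
    by_contra h
    push_neg at h
    have h1 : x i ≤ a := by
      rw [hεa']
      exact term_le hpos hsum hi
    have h2 : b ≤ x i := hge_k i h
    linarith
  have h_le : a ≤ ∑' n, x (k + 1 + n) := by
    rw [← val_tail hpos hsum k, hεa']
    unfold val
    apply Summable.tsum_le_tsum _ (summable_ind hpos hsum εa) (summable_ind hpos hsum _)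
    intro n
    rcases hn : εa n with _|_
    · simp only [Bool.false_eq_true, if_false]
      split
      · exact (hpos n).le
      · exact le_refl _
    · have := hsupp_a n hn
      simp [this]
  have h_ge : ∑' n, x (k + 1 + n) ≤ a := by
    by_contra hcon
    push_neg at hcon
    have htend := hRsum.hasSum.tendsto_sum_nat
    obtain ⟨N, hN⟩ := (htend.eventually (eventually_gt_nhds hcon)).exists
    set F₀ : Finset ℕ := (Finset.range N).image (fun i => k + 1 + i) with hF₀def
    have hF₀sum : ∑ i ∈ F₀, x i = ∑ i ∈ Finset.range N, x (k + 1 + i) := by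
      rw [hF₀def]
      apply Finset.sum_image
      intro i _ j _ hij
      simp only at hij
      omega
    have hF₀gt : ∀ i ∈ F₀, k < i := by
      intro i hi
      rw [hF₀def, Finset.mem_image] at hi
      obtain ⟨jj, _, rfl⟩ := hi
      omega
    have hF₀b : b ≤ ∑ i ∈ F₀, x i := by
      by_contra h
      push_neg at h
      have := hbelow _ (sum_finset_mem F₀) h
      rw [hF₀sum] at this
      linarith
    have hPex : ∃ m, ∃ F : Finset ℕ, F.card = m ∧ (∀ i ∈ F, k < i) ∧ b ≤ ∑ i ∈ F, x i :=
      ⟨F₀.card, F₀, rfl, hF₀gt, hF₀b⟩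
    obtain ⟨F, hFcard, hFgt, hFsum⟩ := Nat.find_spec hPex
    have hFne : F.Nonempty := by
      rcases Finset.eq_empty_or_nonempty F with h|h
      · rw [h] at hFsum
        simp at hFsum
        linarith
      · exact h
    set i₀ := F.max' hFne with hi₀def
    have hi₀F : i₀ ∈ F := F.max'_mem hFne
    have hi₀max : ∀ i ∈ F, i ≤ i₀ := fun i hi => F.le_max' i hi
    set c' := ∑ i ∈ F.erase i₀, x i with hc'def
    have hsplit : c' + x i₀ = ∑ i ∈ F, x i := Finset.sum_erase_add F x hi₀F
    have hc'b : c' < b := by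
      by_contra h
      push_neg at h
      have hcard : (F.erase i₀).card < Nat.find hPex := by
        rw [← hFcard]
        exact Finset.card_erase_lt_of_mem hi₀F
      exact Nat.find_min hPex hcard
        ⟨F.erase i₀, rfl, fun i hi => hFgt i (Finset.mem_of_mem_erase hi), h⟩
    have hc'a : c' ≤ a := hbelow _ (sum_finset_mem _) hc'b
    have hi₀k : k < i₀ := hFgt i₀ hi₀F
    have hxi₀b : x i₀ < b := hlt_k i₀ hi₀k
    have hxi₀ge : b - c' ≤ x i₀ := by linarith
    have hc'd : b - a ≤ c' := by
      by_contra h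
      push_neg at h
      exact hgapE _ (single_mem i₀) (by linarith) hxi₀b
    have hJ : ∀ u, u ∈ achievementSet x → a - c' < u → u < b - c' → False := by
      intro u hu h1 h2
      obtain ⟨εu, hεu⟩ := hu
      have hεu' : u = val x εu := hεu
      set εe : ℕ → Bool := fun n => decide (n ∈ F.erase i₀) with hεedef
      have hdisj : ∀ n, ¬(εe n = true ∧ εu n = true) := by
        intro n ⟨hn1, hn2⟩
        have hnF : n ∈ F.erase i₀ := by
          rw [hεedef] at hn1
          simpa using hn1
        have t1 : x n ≤ u := by
          rw [hεu']
          exact term_le hpos hsum hn2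
        have t2 : x i₀ ≤ x n := hmono (hi₀max n (Finset.mem_of_mem_erase hnF))
        linarith
      have hvale : val x εe = c' := by
        rw [hεedef, hc'def]
        exact val_finset _
      have hval2 : val x (fun n => εe n || εu n) = c' + u := by
        rw [val_or hpos hsum hdisj, hvale, ← hεu']
      have hmem3 : c' + u ∈ achievementSet x := by
        rw [← hval2]
        exact val_mem _
      exact hgapE _ hmem3 (by linarith) (by linarith)
    have hcompL : IsCompact (achievementSet x ∩ Set.Icc 0 (a - c')) :=
      hEcomp.inter_right isClosed_Icc
    obtain ⟨u1, hu1⟩ := hcompL.exists_isGreatest ⟨0, h0E, ⟨le_refl 0, by linarith⟩⟩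
    have hcompR : IsCompact (achievementSet x ∩ Set.Ici (b - c')) :=
      hEcomp.inter_right isClosed_Ici
    obtain ⟨v1, hv1⟩ := hcompR.exists_isLeast ⟨x i₀, single_mem i₀, hxi₀ge⟩
    have hv1i₀ : v1 ≤ x i₀ := hv1.2 ⟨single_mem i₀, hxi₀ge⟩
    have hv1b : v1 < b := lt_of_le_of_lt hv1i₀ hxi₀b
    have hv1a : v1 ≤ a := hbelow _ hv1.1.1 hv1b
    have hu1le : u1 ≤ a - c' := hu1.1.2.2
    have hv1ge : b - c' ≤ v1 := hv1.1.2
    have hmid : Set.Ioo u1 v1 ∩ achievementSet x = ∅ := by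
      rw [Set.eq_empty_iff_forall_notMem]
      rintro y ⟨⟨hy1, hy2⟩, hyE⟩
      rcases le_or_gt y (a - c') with h|h
      · have : y ≤ u1 := hu1.2 ⟨hyE, ⟨mem_nonneg hpos hyE, h⟩⟩
        linarith
      · rcases lt_or_ge y (b - c') with h'|h'
        · exact hJ y hyE h h'
        · have : v1 ≤ y := hv1.2 ⟨hyE, h'⟩
          linarith
    rcases lt_or_eq_of_le hv1a with hlt2 | heq2
    · have := hleft u1 v1 (by linarith) hu1.1.1 hv1.1.1 hmid hlt2
      linarith
    · -- v1 = a
      obtain ⟨n, hn⟩ := hsmall (b - a) hd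
      have hεan : εa n = true := by
        by_contra hf
        have hf' : εa n = false := by simpa using hf
        have hmem4 : a + x n ∈ achievementSet x := by
          rw [hεa']
          exact add_mem hpos hsum hf'
        exact hgapE _ hmem4 (by linarith [hpos n]) (by linarith)
      have hy : a - x n ∈ achievementSet x := by
        rw [hεa']
        exact sub_mem hpos hsum hεan
      have hmem5 : a - x n ∈ Set.Ioo u1 v1 ∩ achievementSet x := by
        refine ⟨⟨?_, ?_⟩, hy⟩
        · linarith
        · rw [← heq2]
          linarith [hpos n]
      rw [hmid] at hmem5
      exact hmem5
  exact ⟨k, hk_eq.symm, le_antisymm h_le h_ge⟩
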